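/- Under the assumptions of the dynamic cavity method on a tree, the Bayesian posterior factorizes: P(s | x_i, σ_{∂i}^{t-1}) ∝ P(s)·P(x_i | s)·∏_{j ∈ ∂i} Q(σ_j^{t-1} | σ_i^{t-1}, s), where σ_i^{t-1} = g_i^{t-1}(x_i, σ_{∂i}^{t-2}) is i's own (deterministic) trajectory and Q denotes the zombie-process probabilities. -/

import Mathlib

open Finset SimpleGraph
set_option linter.unusedSectionVars false
set_option linter.unusedVariables false
set_option maxHeartbeats 1000000

section Alg
variable {V X : Type*} [Fintype V] [DecidableEq V] [Fintype X]

lemma sum_prod_pi {T : Type*} [Fintype T] [DecidableEq T] (w : T → X → ℝ) :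
    ∑ y : T → X, ∏ v, w v (y v) = ∏ v, ∑ χ, w v χ := by
  rw [Finset.prod_univ_sum, Fintype.piFinset_univ]

lemma sum_split (p : V → Prop) [DecidablePred p] (H : (V → X) → ℝ) :
    ∑ x : V → X, H x
      = ∑ a : ({v // p v} → X), ∑ b : ({v // ¬ p v} → X),
          H ((Equiv.piEquivPiSubtypeProd p (fun _ => X)).symm (a, b)) := by
  rw [← Equiv.sum_comp (Equiv.piEquivPiSubtypeProd p (fun _ => X)).symm H,
    Fintype.sum_prod_type]

lemma prod_w_split (p : V → Prop) [DecidablePred p] (w : V → X → ℝ)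
    (a : {v // p v} → X) (b : {v // ¬ p v} → X) :
    (∏ v, w v (((Equiv.piEquivPiSubtypeProd p (fun _ => X)).symm (a, b)) v))
      = (∏ v : {v // p v}, w v.1 (a v)) * ∏ v : {v // ¬ p v}, w v.1 (b v) := by
  rw [← Fintype.prod_subtype_mul_prod_subtype p
    (fun v => w v (((Equiv.piEquivPiSubtypeProd p (fun _ => X)).symm (a, b)) v))]
  congr 1
  · refine Finset.prod_congr rfl fun v _ => ?_
    simp [Equiv.piEquivPiSubtypeProd_symm_apply, v.2]
  · refine Finset.prod_congr rfl fun v _ => ?_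
    simp [Equiv.piEquivPiSubtypeProd_symm_apply, v.2]

lemma indep_mul (p : V → Prop) [DecidablePred p] (f g : (V → X) → ℝ)
    (hf : ∀ x y, (∀ v, p v → x v = y v) → f x = f y)
    (hg : ∀ x y, (∀ v, ¬ p v → x v = y v) → g x = g y)
    (w : V → X → ℝ) (hw : ∀ v, ∑ χ, w v χ = 1) :
    ∑ x : V → X, f x * g x * ∏ v, w v (x v)
      = (∑ x : V → X, f x * ∏ v, w v (x v)) *
        (∑ x : V → X, g x * ∏ v, w v (x v)) := by
  by_cases hne : Nonempty (V → X)
  · obtain ⟨x₀⟩ := hne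
    set e := Equiv.piEquivPiSubtypeProd p (fun _ => X) with he
    set a₀ : {v // p v} → X := fun v => x₀ v.1 with ha₀
    set b₀ : {v // ¬ p v} → X := fun v => x₀ v.1 with hb₀
    have hfa : ∀ a b, f (e.symm (a, b)) = f (e.symm (a, b₀)) := by
      intro a b
      apply hf
      intro v hv
      simp [he, Equiv.piEquivPiSubtypeProd_symm_apply, hv]
    have hgb : ∀ a b, g (e.symm (a, b)) = g (e.symm (a₀, b)) := by
      intro a b
      apply hg
      intro v hv
      simp [he, Equiv.piEquivPiSubtypeProd_symm_apply, hv]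
    have hW2 : ∑ b : {v // ¬ p v} → X, ∏ v : {v // ¬ p v}, w v.1 (b v) = 1 := by
      rw [sum_prod_pi]
      exact Finset.prod_eq_one fun v _ => hw v.1
    have hW1 : ∑ a : {v // p v} → X, ∏ v : {v // p v}, w v.1 (a v) = 1 := by
      rw [sum_prod_pi]
      exact Finset.prod_eq_one fun v _ => hw v.1
    have h2 : (∑ x : V → X, f x * ∏ v, w v (x v))
        = ∑ a : {v // p v} → X,
            f (e.symm (a, b₀)) * ∏ v : {v // p v}, w v.1 (a v) := by
      rw [sum_split p]
      refine Finset.sum_congr rfl fun a _ => ?_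
      calc ∑ b : {v // ¬ p v} → X,
            f (e.symm (a, b)) * ∏ v, w v (e.symm (a, b) v)
          = ∑ b : {v // ¬ p v} → X,
              (f (e.symm (a, b₀)) * ∏ v : {v // p v}, w v.1 (a v)) *
                ∏ v : {v // ¬ p v}, w v.1 (b v) := by
            refine Finset.sum_congr rfl fun b _ => ?_
            rw [prod_w_split p w a b, hfa a b]; ring
        _ = _ := by rw [← Finset.mul_sum, hW2, mul_one]
    have h3 : (∑ x : V → X, g x * ∏ v, w v (x v))
        = ∑ b : {v // ¬ p v} → X,
            g (e.symm (a₀, b)) * ∏ v : {v // ¬ p v}, w v.1 (b v) := by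
      rw [sum_split p, Finset.sum_comm]
      refine Finset.sum_congr rfl fun b _ => ?_
      calc ∑ a : {v // p v} → X,
            g (e.symm (a, b)) * ∏ v, w v (e.symm (a, b) v)
          = ∑ a : {v // p v} → X,
              (g (e.symm (a₀, b)) * ∏ v : {v // ¬ p v}, w v.1 (b v)) *
                ∏ v : {v // p v}, w v.1 (a v) := by
            refine Finset.sum_congr rfl fun a _ => ?_
            rw [prod_w_split p w a b, hgb a b]; ring
        _ = _ := by rw [← Finset.mul_sum, hW1, mul_one]
    have h1 : ∑ x : V → X, f x * g x * ∏ v, w v (x v)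
        = (∑ a : {v // p v} → X,
            f (e.symm (a, b₀)) * ∏ v : {v // p v}, w v.1 (a v)) *
          (∑ b : {v // ¬ p v} → X,
            g (e.symm (a₀, b)) * ∏ v : {v // ¬ p v}, w v.1 (b v)) := by
      rw [sum_split p, Finset.sum_mul_sum]
      refine Finset.sum_congr rfl fun a _ => ?_
      refine Finset.sum_congr rfl fun b _ => ?_
      rw [prod_w_split p w a b, hfa a b, hgb a b]; ring
    rw [h1, h2, h3]
  · rw [not_nonempty_iff] at hne
    simp [Finset.univ_eq_empty]

lemma weight_change (p : V → Prop) [DecidablePred p] (f : (V → X) → ℝ)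
    (hf : ∀ x y, (∀ v, ¬ p v → x v = y v) → f x = f y)
    (w w' : V → X → ℝ) (hw : ∀ v, p v → (∑ χ, w v χ) = ∑ χ, w' v χ)
    (hww : ∀ v, ¬ p v → w v = w' v) :
    ∑ x : V → X, f x * ∏ v, w v (x v)
      = ∑ x : V → X, f x * ∏ v, w' v (x v) := by
  by_cases hne : Nonempty (V → X)
  · obtain ⟨x₀⟩ := hne
    set e := Equiv.piEquivPiSubtypeProd p (fun _ => X) with he
    set a₀ : {v // p v} → X := fun v => x₀ v.1 with ha₀
    have hfb : ∀ a b, f (e.symm (a, b)) = f (e.symm (a₀, b)) := by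
      intro a b
      apply hf
      intro v hv
      simp [he, Equiv.piEquivPiSubtypeProd_symm_apply, hv]
    have key : ∀ (u : V → X → ℝ),
        ∑ x : V → X, f x * ∏ v, u v (x v)
          = (∏ v : {v // p v}, ∑ χ, u v.1 χ) *
            ∑ b : {v // ¬ p v} → X,
              f (e.symm (a₀, b)) * ∏ v : {v // ¬ p v}, u v.1 (b v) := by
      intro u
      rw [sum_split p, Finset.sum_comm, Finset.mul_sum]
      refine Finset.sum_congr rfl fun b _ => ?_
      calc ∑ a : {v // p v} → X,
            f (e.symm (a, b)) * ∏ v, u v (e.symm (a, b) v)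
          = ∑ a : {v // p v} → X,
              (f (e.symm (a₀, b)) * ∏ v : {v // ¬ p v}, u v.1 (b v)) *
                ∏ v : {v // p v}, u v.1 (a v) := by
            refine Finset.sum_congr rfl fun a _ => ?_
            rw [prod_w_split p u a b, hfb a b]; ring
        _ = _ := by rw [← Finset.mul_sum, sum_prod_pi]; ring
    rw [key w, key w']
    congr 1
    · exact Finset.prod_congr rfl fun v _ => hw v.1 v.2
    · refine Finset.sum_congr rfl fun b _ => ?_
      congr 1
      exact Finset.prod_congr rfl fun v _ => by rw [hww v.1 v.2]
  · rw [not_nonempty_iff] at hne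
    simp [Finset.univ_eq_empty]

lemma prod_indep {ι : Type*} [DecidableEq ι] (J : Finset ι) (S : ι → V → Prop)
    (f : ι → (V → X) → ℝ)
    (hdep : ∀ j ∈ J, ∀ x y, (∀ v, S j v → x v = y v) → f j x = f j y)
    (hdisj : ∀ j ∈ J, ∀ j' ∈ J, j ≠ j' → ∀ v, S j v → ¬ S j' v)
    (w : V → X → ℝ) (hw : ∀ v, ∑ χ, w v χ = 1) :
    ∑ x : V → X, (∏ j ∈ J, f j x) * ∏ v, w v (x v)
      = ∏ j ∈ J, ∑ x : V → X, f j x * ∏ v, w v (x v) := by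
  classical
  revert hdep hdisj
  induction J using Finset.induction with
  | empty => intro _ _; simp [sum_prod_pi, hw]
  | @insert j J hj ih =>
    intro hdep hdisj
    simp only [Finset.prod_insert hj]
    have step := indep_mul (S j) (f j) (fun x => ∏ j' ∈ J, f j' x)
      (hdep j (Finset.mem_insert_self j J))
      (fun x y hxy => Finset.prod_congr rfl fun j' hj' => by
        refine hdep j' (Finset.mem_insert_of_mem hj') x y fun v hv => ?_
        refine hxy v ?_
        exact hdisj j' (Finset.mem_insert_of_mem hj') j
          (Finset.mem_insert_self j J) (fun h => hj (h ▸ hj')) v hv)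
      w hw
    calc ∑ x : V → X, (f j x * ∏ j' ∈ J, f j' x) * ∏ v, w v (x v)
        = (∑ x : V → X, f j x * ∏ v, w v (x v)) *
          (∑ x : V → X, (∏ j' ∈ J, f j' x) * ∏ v, w v (x v)) := step
      _ = _ := by
          rw [ih (fun j' hj' => hdep j' (Finset.mem_insert_of_mem hj'))
            (fun a ha b hb => hdisj a (Finset.mem_insert_of_mem ha) b
              (Finset.mem_insert_of_mem hb))]
end Alg

section Graph
variable {V : Type*}

/-- The graph `G` with vertex `i` cut off (all edges at `i` removed). -/
def sideGraph (G : SimpleGraph V) (i : V) : SimpleGraph V where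
  Adj a b := G.Adj a b ∧ a ≠ i ∧ b ≠ i
  symm := ⟨fun a b ⟨h, ha, hb⟩ => ⟨h.symm, hb, ha⟩⟩
  loopless := ⟨fun a ⟨h, _, _⟩ => G.irrefl h⟩

lemma sideGraph_le (G : SimpleGraph V) (i : V) : sideGraph G i ≤ G :=
  fun a b h => (show G.Adj a b ∧ a ≠ i ∧ b ≠ i from h).1

lemma sideGraph_support_ne {G : SimpleGraph V} {i : V} :
    ∀ {a b : V} (w : (sideGraph G i).Walk a b), a ≠ i → ∀ u ∈ w.support, u ≠ i := by
  intro a b w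
  induction w with
  | nil => intro ha u hu; simp at hu; subst hu; exact ha
  | cons h w ih =>
    intro ha u hu
    rw [SimpleGraph.Walk.support_cons] at hu
    rcases List.mem_cons.mp hu with rfl | hu
    · exact ha
    · exact ih (show G.Adj _ _ ∧ _ ∧ _ from h).2.2 u hu

lemma sideGraph_reach_ne {G : SimpleGraph V} {i a b : V}
    (h : (sideGraph G i).Reachable a b) (ha : a ≠ i) : b ≠ i := by
  obtain ⟨w⟩ := h
  exact sideGraph_support_ne w ha b (SimpleGraph.Walk.end_mem_support w)

lemma sideGraph_disjoint [DecidableEq V] {G : SimpleGraph V} (htree : G.IsTree)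
    {i j j' : V} (hj : G.Adj i j) (hj' : G.Adj i j') (hne : j ≠ j') :
    ¬ (sideGraph G i).Reachable j j' := by
  intro hr
  obtain ⟨w⟩ := hr
  have hiw : ∀ u ∈ w.support, u ≠ i := sideGraph_support_ne w hj.ne'
  set w' : G.Walk j j' := w.map (SimpleGraph.Hom.ofLE (sideGraph_le G i))
  have hsupp : w'.support = w.support := by
    simp only [w', SimpleGraph.Walk.support_map]
    have hid : ⇑(SimpleGraph.Hom.ofLE (sideGraph_le G i)) = id := rfl
    rw [hid, List.map_id]
  set q := w'.toPath with hq
  have hiq : i ∉ (q : G.Walk j j').support := by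
    intro hc
    have := SimpleGraph.Walk.support_toPath_subset w' hc
    rw [hsupp] at this
    exact hiw i this rfl
  have hp1 : (SimpleGraph.Walk.cons hj (q : G.Walk j j')).IsPath :=
    (SimpleGraph.Walk.cons_isPath_iff hj _).mpr ⟨q.2, hiq⟩
  have hp2 : (SimpleGraph.Walk.cons hj' (SimpleGraph.Walk.nil : G.Walk j' j')).IsPath := by
    rw [SimpleGraph.Walk.cons_isPath_iff]
    exact ⟨SimpleGraph.Walk.IsPath.nil, by simp [hj'.ne]⟩
  have huniq := (SimpleGraph.isAcyclic_iff_path_unique.mp htree.IsAcyclic)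
    ⟨_, hp1⟩ ⟨_, hp2⟩
  have hw : SimpleGraph.Walk.cons hj (q : G.Walk j j')
      = SimpleGraph.Walk.cons hj' SimpleGraph.Walk.nil := congrArg Subtype.val huniq
  have hs := congrArg SimpleGraph.Walk.support hw
  rw [SimpleGraph.Walk.support_cons, SimpleGraph.Walk.support_cons,
    SimpleGraph.Walk.support_nil] at hs
  have hqs : (q : G.Walk j j').support = [j'] := by injection hs
  have h2 := SimpleGraph.Walk.support_eq_cons (q : G.Walk j j')
  rw [hqs] at h2
  exact hne (List.head_eq_of_cons_eq h2.symm)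
end Graph

/-- Factorization of the Bayesian posterior via the dynamic cavity method. -/
theorem posterior_cavity_factorization {V X A S : Type*} [Fintype V]
    [DecidableEq V] [Fintype X] [DecidableEq X] [DecidableEq A]
    (G : SimpleGraph V) [DecidableRel G.Adj] (htree : G.IsTree)
    (upd : V → X → (V → ℕ → A) → ℕ → A)
    (hloc : ∀ v xv (h h' : V → ℕ → A) (t : ℕ),
      (∀ j, G.Adj v j ∨ j = v → ∀ t' < t, h j t' = h' j t') →
      upd v xv h t = upd v xv h' t)
    (traj : (V → X) → V → ℕ → A)
    (htraj : ∀ x v t, traj x v t = upd v (x v) (fun j t' => traj x j t') t)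
    (π : S → ℝ) (ν : S → V → X → ℝ)
    (hν : ∀ s v χ, 0 ≤ ν s v χ) (hν1 : ∀ s v, ∑ χ, ν s v χ = 1)
    (i : V) (ξ : X) (ω : V → ℕ → A) (t : ℕ)
    (τ : ℕ → A)
    (hτ : ∀ t', τ t' =
      upd i ξ (fun j t'' => if j = i then τ t'' else ω j t'') t')
    (ztraj : (V → X) → V → ℕ → A)
    (hz1 : ∀ x t', ztraj x i t' = τ t')
    (hz2 : ∀ x v t', v ≠ i →
      ztraj x v t' = upd v (x v) (fun j t'' => ztraj x j t'') t') :
    ∀ s : S,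
      π s * ν s i ξ *
        (∑ x : V → X,
          if x i = ξ ∧ ∀ j ∈ G.neighborFinset i, ∀ t' < t, traj x j t' = ω j t'
          then ∏ v ∈ Finset.univ.erase i, ν s v (x v) else 0) =
      π s * ν s i ξ *
        ∏ j ∈ G.neighborFinset i,
          (∑ x : V → X,
            if ∀ t' < t, ztraj x j t' = ω j t'
            then ∏ v, ν s v (x v) else 0) := by
  intro s
  congr 1
  -- the trajectory-equivalence key lemma
  have key : ∀ x : V → X, x i = ξ →
      (∀ j ∈ G.neighborFinset i, ∀ t' < t,
        traj x j t' = ω j t' ∨ ztraj x j t' = ω j t') →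
      ∀ t', t' ≤ t → ∀ v, traj x v t' = ztraj x v t' := by
    intro x hxi hyp t'
    induction t' using Nat.strong_induction_on with
    | _ t' IH =>
      intro ht' v
      by_cases hv : v = i
      · rw [hv, hz1, hτ t', htraj, hxi]
        refine hloc i ξ _ _ t' ?_
        intro j hj t'' ht''
        show traj x j t'' = if j = i then τ t'' else ω j t''
        rcases hj with hadj | hj'
        · have hji : j ≠ i := hadj.ne'
          rw [if_neg hji]
          rcases hyp j ((SimpleGraph.mem_neighborFinset G i j).mpr hadj) t''
              (ht''.trans_le ht') with h | h
          · exact h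
          · rw [IH t'' ht'' ((ht''.trans_le ht').le) j]
            exact h
        · rw [hj', if_pos rfl, IH t'' ht'' (ht''.le.trans ht') i, hz1]
      · rw [htraj, hz2 x v t' hv]
        refine hloc v (x v) _ _ t' ?_
        intro j hj t'' ht''
        exact IH t'' ht'' (ht''.le.trans ht') j
  -- locality of the zombie process
  have zloc : ∀ (x y : V → X), ∀ t' (v : V), v ≠ i →
      (∀ u, (sideGraph G i).Reachable v u → x u = y u) →
      ztraj x v t' = ztraj y v t' := by
    intro x y t'
    induction t' using Nat.strong_induction_on with
    | _ t' IH =>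
      intro v hv hagree
      rw [hz2 x v t' hv, hz2 y v t' hv, hagree v (SimpleGraph.Reachable.refl v)]
      refine hloc v (y v) _ _ t' ?_
      intro j hj t'' ht''
      show ztraj x j t'' = ztraj y j t''
      by_cases hji : j = i
      · subst hji; rw [hz1, hz1]
      · refine IH t'' ht'' j hji ?_
        intro u hu
        apply hagree
        rcases hj with hadj | rfl
        · have hvj : (sideGraph G i).Adj v j :=
              show G.Adj v j ∧ v ≠ i ∧ j ≠ i from ⟨hadj, hv, hji⟩
          exact hvj.reachable.trans hu
        · exact hu
  have iffE : ∀ x : V → X, x i = ξ →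
      ((∀ j ∈ G.neighborFinset i, ∀ t' < t, traj x j t' = ω j t') ↔
       (∀ j ∈ G.neighborFinset i, ∀ t' < t, ztraj x j t' = ω j t')) := by
    intro x hxi
    constructor
    · intro h j hj t' ht'
      rw [← key x hxi (fun j hj t' ht' => Or.inl (h j hj t' ht')) t' ht'.le j]
      exact h j hj t' ht'
    · intro h j hj t' ht'
      rw [key x hxi (fun j hj t' ht' => Or.inr (h j hj t' ht')) t' ht'.le j]
      exact h j hj t' ht'
  classical
  set F : V → (V → X) → ℝ :=
    fun j x => if (∀ t' < t, ztraj x j t' = ω j t') then 1 else 0 with hF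
  set μ : V → X → ℝ :=
    fun v χ => if v = i then (if χ = ξ then (1:ℝ) else 0) else ν s v χ with hμ
  have hμ1 : ∀ v, ∑ χ, μ v χ = 1 := by
    intro v
    by_cases hv : v = i
    · subst hv; simp [hμ]
    · simp [hμ, hv, hν1 s v]
  have stepA : (∑ x : V → X,
      if x i = ξ ∧ ∀ j ∈ G.neighborFinset i, ∀ t' < t, traj x j t' = ω j t'
      then ∏ v ∈ Finset.univ.erase i, ν s v (x v) else 0)
      = ∑ x : V → X, (∏ j ∈ G.neighborFinset i, F j x) * ∏ v, μ v (x v) := by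
    refine Finset.sum_congr rfl fun x _ => ?_
    by_cases hxi : x i = ξ
    · have hprodμ : (∏ v, μ v (x v)) = ∏ v ∈ Finset.univ.erase i, ν s v (x v) := by
        rw [← Finset.mul_prod_erase Finset.univ _ (Finset.mem_univ i)]
        have h1 : μ i (x i) = 1 := by simp [hμ, hxi]
        rw [h1, one_mul]
        refine Finset.prod_congr rfl fun v hv => ?_
        have hvne : v ≠ i := (Finset.mem_erase.mp hv).1
        simp [hμ, hvne]
      have hFprod : (∏ j ∈ G.neighborFinset i, F j x)
          = if (∀ j ∈ G.neighborFinset i, ∀ t' < t, ztraj x j t' = ω j t')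
            then (1:ℝ) else 0 := by
        by_cases hc : ∀ j ∈ G.neighborFinset i, ∀ t' < t, ztraj x j t' = ω j t'
        · rw [if_pos hc]
          exact Finset.prod_eq_one fun j hj => by
            simp only [hF]; exact if_pos (hc j hj)
        · rw [if_neg hc]
          have hex : ∃ j ∈ G.neighborFinset i,
              ¬ (∀ t' < t, ztraj x j t' = ω j t') := by
            by_contra h
            push_neg at h
            exact hc fun j hj => (h j hj)
          obtain ⟨j, hj, hPj⟩ := hex
          exact Finset.prod_eq_zero hj (by simp only [hF]; exact if_neg hPj)
      rw [hFprod, hprodμ, ite_mul, one_mul, zero_mul]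
      refine if_congr ?_ rfl rfl
      constructor
      · rintro ⟨-, h⟩; exact (iffE x hxi).mp h
      · intro h; exact ⟨hxi, (iffE x hxi).mpr h⟩
    · have h0 : μ i (x i) = 0 := by simp [hμ, hxi]
      have hz : (∏ v, μ v (x v)) = 0 :=
        Finset.prod_eq_zero (Finset.mem_univ i) h0
      rw [hz, mul_zero, if_neg (by rintro ⟨h, -⟩; exact hxi h)]
  have hdep : ∀ j ∈ G.neighborFinset i, ∀ x y : V → X,
      (∀ v, (sideGraph G i).Reachable j v → x v = y v) → F j x = F j y := by
    intro j hj x y hxy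
    have hji : j ≠ i := ((SimpleGraph.mem_neighborFinset G i j).mp hj).ne'
    have hzz : ∀ t', ztraj x j t' = ztraj y j t' :=
      fun t' => zloc x y t' j hji hxy
    simp only [hF, hzz]
  have hdisj : ∀ j ∈ G.neighborFinset i, ∀ j' ∈ G.neighborFinset i, j ≠ j' →
      ∀ v, (sideGraph G i).Reachable j v → ¬ (sideGraph G i).Reachable j' v := by
    intro j hj j' hj' hne v h1 h2
    exact sideGraph_disjoint htree ((SimpleGraph.mem_neighborFinset G i j).mp hj)
      ((SimpleGraph.mem_neighborFinset G i j').mp hj') hne (h1.trans h2.symm)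
  have stepB := prod_indep (G.neighborFinset i)
    (fun j v => (sideGraph G i).Reachable j v) F hdep hdisj μ hμ1
  have stepC : ∀ j ∈ G.neighborFinset i,
      (∑ x : V → X, F j x * ∏ v, μ v (x v))
        = ∑ x : V → X,
            (if ∀ t' < t, ztraj x j t' = ω j t'
             then ∏ v, ν s v (x v) else 0) := by
    intro j hj
    have hji : j ≠ i := ((SimpleGraph.mem_neighborFinset G i j).mp hj).ne'
    have hwc := weight_change (fun v => v = i) (F j)
      (fun x y hxy => hdep j hj x y fun v hv =>
        hxy v (sideGraph_reach_ne hv hji))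
      μ (ν s)
      (fun v hv => by rw [hv, hμ1 i, hν1 s i])
      (fun v hv => by funext χ; simp [hμ, hv])
    rw [hwc]
    refine Finset.sum_congr rfl fun x _ => ?_
    simp only [hF, ite_mul, one_mul, zero_mul]
  calc (∑ x : V → X,
      if x i = ξ ∧ ∀ j ∈ G.neighborFinset i, ∀ t' < t, traj x j t' = ω j t'
      then ∏ v ∈ Finset.univ.erase i, ν s v (x v) else 0)
      = ∑ x : V → X, (∏ j ∈ G.neighborFinset i, F j x) * ∏ v, μ v (x v) := stepA
    _ = ∏ j ∈ G.neighborFinset i, ∑ x : V → X, F j x * ∏ v, μ v (x v) := stepB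
    _ = _ := Finset.prod_congr rfl stepC
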